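/- arXiv:2508.05110 — 2 statements merged into one kernel-verified Lean document; each statement's English description precedes it below -/
import Mathlib

section
/- Let A be a 0-1 b×v matrix with v ≥ 2 such that AᵀA = (r−λ)·I + λ·J for real numbers r, λ with r > λ ≥ 0. Then b ≥ v (Fisher's inequality). Consequently, if in addition b ≤ v and every row of A sums to the same value k, then b = v and k = r, i.e., A is the incidence matrix of a symmetric (v, k, λ)-design. -/
open Matrix Finset Real

/-- The all-ones `v × v` matrix `J`. -/
def allOnes (v : ℕ) : Matrix (Fin v) (Fin v) ℝ := Matrix.of fun _ _ => 1

lemma posdef_aux (v : ℕ) (r lam : ℝ) (hlam : 0 ≤ lam) (hrl : lam < r) :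
    ((r - lam) • (1 : Matrix (Fin v) (Fin v) ℝ) + lam • allOnes v).PosDef := by
  refine Matrix.PosDef.of_dotProduct_mulVec_pos ?_ ?_
  · unfold Matrix.IsHermitian
    ext i j
    simp [allOnes, Matrix.one_apply, Matrix.conjTranspose_apply, mul_comm]
    by_cases h : i = j <;> simp [h, eq_comm]
  · intro x hx
    have hJ : (allOnes v) *ᵥ x = fun _ => ∑ j, x j := by
      ext i; simp [allOnes, Matrix.mulVec, dotProduct]
    have key : (star x) ⬝ᵥ (((r - lam) • (1 : Matrix (Fin v) (Fin v) ℝ) + lam • allOnes v) *ᵥ x)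
        = (r - lam) * (∑ i, x i ^ 2) + lam * (∑ i, x i) ^ 2 := by
      simp only [Matrix.add_mulVec, Matrix.smul_mulVec, Matrix.one_mulVec,
        dotProduct_add, dotProduct_smul, smul_eq_mul, hJ, star_trivial]
      congr 1
      · congr 1
        simp [dotProduct, sq]
      · congr 1
        simp [dotProduct, ← Finset.sum_mul, sq]
    rw [key]
    have h1 : 0 < ∑ i, x i ^ 2 := by
      have : ∃ i, x i ≠ 0 := by
        by_contra h
        push_neg at h
        exact hx (funext h)
      obtain ⟨i, hi⟩ := this
      exact Finset.sum_pos' (fun j _ => sq_nonneg _) ⟨i, Finset.mem_univ i, by positivity⟩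
    have h2 : 0 ≤ lam * (∑ i, x i) ^ 2 := by positivity
    nlinarith

/-- Fisher's inequality: a 0-1 matrix with Gram matrix
`(r-λ)·I + λ·J`, `r > λ ≥ 0`, has at least as many rows as columns; consequently if
moreover `b ≤ v` and all rows sum to `k`, then `b = v` and `k = r` (a symmetric design). -/
theorem stmt_1 (b v : ℕ) (hv : 2 ≤ v) (A : Matrix (Fin b) (Fin v) ℝ)
    (h01 : ∀ i j, A i j = 0 ∨ A i j = 1)
    (r lam : ℝ) (hlam : 0 ≤ lam) (hrl : lam < r)
    (hgram : Aᵀ * A = (r - lam) • (1 : Matrix (Fin v) (Fin v) ℝ) + lam • allOnes v) :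
    v ≤ b ∧
      (b ≤ v → ∀ k : ℝ, (∀ i, ∑ j, A i j = k) → b = v ∧ k = r) := by
  have hpd : (Aᵀ * A).PosDef := hgram ▸ posdef_aux v r lam hlam hrl
  have hunit : IsUnit (Aᵀ * A) := hpd.isUnit
  have hrank : (Aᵀ * A).rank = v := by
    rw [Matrix.rank_of_isUnit _ hunit, Fintype.card_fin]
  have hvb : v ≤ b := by
    have h1 : (Aᵀ * A).rank = A.rank := Matrix.rank_transpose_mul_self A
    have h2 : A.rank ≤ b := by
      simpa using Matrix.rank_le_card_height A
    omega
  refine ⟨hvb, fun hbv k hk => ?_⟩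
  have hb : b = v := le_antisymm hbv hvb
  refine ⟨hb, ?_⟩
  -- column sums equal r
  have hcol : ∀ j, ∑ i, A i j = r := by
    intro j
    have := congrFun (congrFun hgram j) j
    simp [Matrix.mul_apply, Matrix.one_apply, allOnes, Matrix.transpose_apply] at this
    have hsq : ∀ i, A i j * A i j = A i j := by
      intro i; rcases h01 i j with h | h <;> simp [h]
    rw [Finset.sum_congr rfl (fun i _ => hsq i)] at this
    linarith
  have htot : ∑ i, ∑ j, A i j = ∑ j : Fin v, ∑ i, A i j := Finset.sum_comm
  rw [Finset.sum_congr rfl (fun i _ => hk i), Finset.sum_congr rfl (fun j _ => hcol j)] at htot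
  rw [hb] at htot
  simp only [Finset.sum_const, Finset.card_univ, Fintype.card_fin, nsmul_eq_mul] at htot
  have hv0 : (v : ℝ) ≠ 0 := by positivity
  exact mul_left_cancel₀ hv0 htot
end

section
/- Let v ≥ 2 be an integer and let M be a v×v real symmetric positive definite matrix such that M·1_v = v·1_v and tr(M) = T with T > v. Then tr(M⁻¹) = (v−1)²/(T − v) + 1/v if and only if M = a·I + b·J with a = (T − v)/(v − 1) and b = 1 − a/v; equivalently, if and only if M has eigenvalue (T − v)/(v − 1) with multiplicity v − 1 and eigenvalue v with multiplicity 1. -/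
open Matrix Finset Real

private lemma cs_eq {ι : Type*} (s : Finset ι) (f : ι → ℝ) (hf : ∀ i ∈ s, 0 < f i)
    (h : (∑ i ∈ s, f i) * (∑ i ∈ s, (f i)⁻¹) = (s.card : ℝ) ^ 2) :
    ∀ i ∈ s, ∀ k ∈ s, f i = f k := by
  have key : ∑ i ∈ s, ∑ k ∈ s, (f i - f k) ^ 2 / (f i * f k)
      = 2 * ((∑ i ∈ s, f i) * (∑ i ∈ s, (f i)⁻¹)) - 2 * (s.card : ℝ) ^ 2 := by
    have h1 : ∀ i ∈ s, ∀ k ∈ s, (f i - f k) ^ 2 / (f i * f k)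
        = f i * (f k)⁻¹ + f k * (f i)⁻¹ - 2 := by
      intro i hi k hk
      have hfi := (hf i hi).ne'
      have hfk := (hf k hk).ne'
      field_simp
      ring
    calc ∑ i ∈ s, ∑ k ∈ s, (f i - f k) ^ 2 / (f i * f k)
        = ∑ i ∈ s, ∑ k ∈ s, (f i * (f k)⁻¹ + f k * (f i)⁻¹ - 2) := by
          refine Finset.sum_congr rfl fun i hi => Finset.sum_congr rfl fun k hk => h1 i hi k hk
      _ = 2 * ((∑ i ∈ s, f i) * (∑ i ∈ s, (f i)⁻¹)) - 2 * (s.card : ℝ) ^ 2 := by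
          simp only [Finset.sum_sub_distrib, Finset.sum_add_distrib, Finset.sum_const,
            nsmul_eq_mul, ← Finset.mul_sum, ← Finset.sum_mul]
          ring
  rw [h, sub_self] at key
  have hzero : ∀ i ∈ s, ∀ k ∈ s, (f i - f k) ^ 2 / (f i * f k) = 0 := by
    have houter := Finset.sum_eq_zero_iff_of_nonneg (fun i hi => Finset.sum_nonneg
      (fun k hk => div_nonneg (sq_nonneg _) (mul_pos (hf i hi) (hf k hk)).le)) |>.mp key
    intro i hi k hk
    have := Finset.sum_eq_zero_iff_of_nonneg (fun k hk => div_nonneg (sq_nonneg _)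
      (mul_pos (hf i hi) (hf k hk)).le) |>.mp (houter i hi)
    exact this k hk
  intro i hi k hk
  have h0 := hzero i hi k hk
  have hne : f i * f k ≠ 0 := (mul_pos (hf i hi) (hf k hk)).ne'
  have h1 := (div_eq_zero_iff.mp h0).resolve_right hne
  have h2 := pow_eq_zero_iff (n := 2) (by norm_num) |>.mp h1
  linarith

/-- for a symmetric positive definite `v × v` matrix `M` with
`M·1 = v·1` and `tr(M) = T > v`, equality `tr(M⁻¹) = (v-1)²/(T-v) + 1/v` holds
if and only if `M = a·I + b·J` with `a = (T-v)/(v-1)` and `b = 1 - a/v`. -/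
theorem stmt_8 (v : ℕ) (hv : 2 ≤ v) (M : Matrix (Fin v) (Fin v) ℝ)
    (hsym : M.IsSymm) (hpd : M.PosDef)
    (hone : M.mulVec (fun _ => 1) = fun _ => (v : ℝ))
    (T : ℝ) (hT : M.trace = T) (hTv : (v : ℝ) < T) :
    M⁻¹.trace = ((v : ℝ) - 1) ^ 2 / (T - v) + 1 / v ↔
      M = ((T - (v : ℝ)) / ((v : ℝ) - 1)) • (1 : Matrix (Fin v) (Fin v) ℝ) +
        (1 - ((T - (v : ℝ)) / ((v : ℝ) - 1)) / v) • allOnes v := by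
  have h2v : (2 : ℝ) ≤ (v : ℝ) := by exact_mod_cast hv
  have hvR : (v : ℝ) ≠ 0 := by linarith
  have hv1 : (v : ℝ) - 1 ≠ 0 := by linarith
  have hTvne : T - (v : ℝ) ≠ 0 := by linarith
  set a : ℝ := (T - (v : ℝ)) / ((v : ℝ) - 1) with hadef
  set b : ℝ := 1 - a / v with hbdef
  have ha0 : 0 < a := div_pos (by linarith) (by linarith)
  constructor
  · -- forward direction
    intro htr
    have hM : M.IsHermitian := hpd.1
    set U : Matrix (Fin v) (Fin v) ℝ := (hM.eigenvectorUnitary : Matrix (Fin v) (Fin v) ℝ) with hUdef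
    have hU1 : star U * U = 1 := mem_unitaryGroup_iff'.mp hM.eigenvectorUnitary.2
    have hU2 : U * star U = 1 := mem_unitaryGroup_iff.mp hM.eigenvectorUnitary.2
    set lam : Fin v → ℝ := hM.eigenvalues with hlamdef
    have hspec : M = U * diagonal lam * star U := by
      have := hM.spectral_theorem
      simpa [RCLike.ofReal_real_eq_id] using this
    have hlampos : ∀ i, 0 < lam i := hpd.eigenvalues_pos
    have hMinv : M⁻¹ = U * diagonal (fun i => (lam i)⁻¹) * star U := by
      apply inv_eq_right_inv
      rw [hspec]
      have hDD : diagonal lam * diagonal (fun i => (lam i)⁻¹) = 1 := by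
        rw [diagonal_mul_diagonal]
        convert diagonal_one
        exact mul_inv_cancel₀ (hlampos _).ne'
      have e1 : U * diagonal lam * star U * (U * diagonal (fun i => (lam i)⁻¹) * star U)
          = U * (diagonal lam * (star U * U) * diagonal (fun i => (lam i)⁻¹)) * star U := by
        noncomm_ring
      rw [e1, hU1, mul_one, hDD, mul_one, hU2]
    have htrM : ∑ i, lam i = T := by
      rw [← hT, hspec, trace_mul_cycle, hU1, one_mul, trace_diagonal]
    have htrMinv : ∑ i, (lam i)⁻¹ = ((v : ℝ) - 1) ^ 2 / (T - v) + 1 / v := by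
      rw [← htr, hMinv, trace_mul_cycle, hU1, one_mul, trace_diagonal]
    -- eigenvector: some eigenvalue equals v
    have hDc : ∀ i, lam i * ((star U).mulVec (fun _ => 1) i)
        = v * ((star U).mulVec (fun _ => 1) i) := by
      have h1 : M.mulVec (fun _ => 1) = (v : ℝ) • (fun _ => (1:ℝ)) := by
        rw [hone]; funext i; simp
      have h2 : diagonal lam *ᵥ ((star U) *ᵥ (fun _ => 1))
          = (v : ℝ) • ((star U) *ᵥ (fun _ => 1)) := by
        have h3 : (star U) *ᵥ (M *ᵥ (fun _ => 1)) = (star U) *ᵥ ((v : ℝ) • (fun _ => (1:ℝ))) := by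
          rw [h1]
        rw [hspec, mulVec_smul] at h3
        calc diagonal lam *ᵥ ((star U) *ᵥ (fun _ => 1))
            = (star U * (U * diagonal lam * star U)) *ᵥ (fun _ => 1) := by
              rw [show star U * (U * diagonal lam * star U)
                  = (star U * U) * diagonal lam * star U from by noncomm_ring,
                hU1, one_mul, ← mulVec_mulVec]
          _ = (v : ℝ) • ((star U) *ᵥ (fun _ => 1)) := by
              rw [← mulVec_mulVec, h3]
      intro i
      have := congrFun h2 i
      rwa [mulVec_diagonal] at this
    obtain ⟨j, hj⟩ : ∃ j, (star U).mulVec (fun _ => 1) j ≠ 0 := by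
      by_contra hno
      push_neg at hno
      have hc : (star U).mulVec (fun _ => 1) = 0 := funext hno
      have h4 : U *ᵥ ((star U) *ᵥ (fun _ => (1:ℝ))) = 0 := by rw [hc, mulVec_zero]
      rw [mulVec_mulVec, hU2, one_mulVec] at h4
      have := congrFun h4 ⟨0, by omega⟩
      simp at this
    have hlamj : lam j = v := mul_right_cancel₀ hj (hDc j)
    -- all other eigenvalues equal a
    set s : Finset (Fin v) := Finset.univ.erase j with hsdef
    have hcardn : s.card = v - 1 := by
      rw [hsdef, Finset.card_erase_of_mem (Finset.mem_univ j), Finset.card_univ, Fintype.card_fin]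
    have hcard : (s.card : ℝ) = (v : ℝ) - 1 := by
      rw [hcardn, Nat.cast_sub (by omega), Nat.cast_one]
    have hsum : ∑ i ∈ s, lam i = T - v := by
      have := Finset.sum_erase_add Finset.univ lam (Finset.mem_univ j)
      rw [htrM] at this
      rw [hsdef]
      rw [hlamj] at this
      linarith
    have hsuminv : ∑ i ∈ s, (lam i)⁻¹ = ((v : ℝ) - 1) ^ 2 / (T - v) := by
      have := Finset.sum_erase_add Finset.univ (fun i => (lam i)⁻¹) (Finset.mem_univ j)
      rw [htrMinv] at this
      simp only [hlamj] at this
      rw [hsdef]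
      have h1v : ((v : ℝ))⁻¹ = 1 / v := by rw [one_div]
      linarith
    have hprod : (∑ i ∈ s, lam i) * (∑ i ∈ s, (lam i)⁻¹) = (s.card : ℝ) ^ 2 := by
      rw [hsum, hsuminv, hcard]
      field_simp
    have heq := cs_eq s lam (fun i _ => hlampos i) hprod
    have hlam_val : ∀ i, i ≠ j → lam i = a := by
      intro i hi
      have hi' : i ∈ s := Finset.mem_erase.mpr ⟨hi, Finset.mem_univ i⟩
      have hconst : ∑ k ∈ s, lam k = s.card • lam i := by
        rw [← Finset.sum_const]
        exact Finset.sum_congr rfl fun k hk => heq k hk i hi'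
      rw [hsum, nsmul_eq_mul, hcard] at hconst
      rw [hadef, eq_comm, div_eq_iff hv1]
      linarith [hconst]
    -- entrywise formula for M
    have hentry : ∀ i k, M i k
        = a * (if i = k then (1:ℝ) else 0) + ((v : ℝ) - a) * (U i j * U k j) := by
      intro i k
      have hM1 : M i k = ∑ q, U i q * lam q * U k q := by
        rw [hspec, Matrix.mul_apply]
        refine Finset.sum_congr rfl fun q _ => ?_
        rw [Matrix.mul_diagonal, Matrix.star_apply, star_trivial]
      rw [hM1]
      have hterm : ∀ q, U i q * lam q * U k q
          = a * (U i q * U k q) + (if q = j then ((v : ℝ) - a) * (U i j * U k j) else 0) := by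
        intro q
        by_cases hq : q = j
        · subst hq; rw [hlamj, if_pos rfl]; ring
        · rw [hlam_val q hq, if_neg hq]; ring
      rw [Finset.sum_congr rfl fun q _ => hterm q, Finset.sum_add_distrib, ← Finset.mul_sum,
        Finset.sum_ite_eq' Finset.univ j]
      have hUU : ∑ q, U i q * U k q = (if i = k then (1:ℝ) else 0) := by
        have h5 := congrFun (congrFun hU2 i) k
        rw [Matrix.mul_apply] at h5
        simp only [Matrix.star_apply, star_trivial] at h5
        rw [Matrix.one_apply] at h5
        exact h5
      rw [hUU]
      simp
    by_cases ha : a = (v : ℝ)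
    · -- all eigenvalues equal v, so M = v • 1 and b = 0
      have hb0 : b = 0 := by rw [hbdef, ha, div_self hvR]; ring
      ext i k
      rw [hentry i k]
      simp only [Matrix.add_apply, Matrix.smul_apply, Matrix.one_apply, allOnes,
        Matrix.of_apply, smul_eq_mul, hb0, ha, mul_one]
      ring
    · -- a ≠ v : the eigenvector column is constant
      set sw : ℝ := ∑ i, U i j with hswdef
      have hva : (v : ℝ) - a ≠ 0 := sub_ne_zero.mpr (Ne.symm ha)
      have hws : ∀ i, U i j * sw = 1 := by
        intro i
        have h6 := congrFun hone i
        simp only [Matrix.mulVec, dotProduct, mul_one] at h6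
        have h7 : ∑ k, M i k = a + ((v : ℝ) - a) * (U i j * sw) := by
          calc ∑ k, M i k
              = ∑ k, (a * (if i = k then (1:ℝ) else 0) + ((v : ℝ) - a) * (U i j * U k j)) :=
                Finset.sum_congr rfl fun k _ => hentry i k
            _ = a + ((v : ℝ) - a) * (U i j * sw) := by
                rw [Finset.sum_add_distrib, ← Finset.mul_sum, Finset.sum_ite_eq Finset.univ i]
                simp only [Finset.mem_univ, if_pos, mul_one]
                rw [← Finset.mul_sum, ← Finset.mul_sum, hswdef]
        rw [h7] at h6
        have h8 : ((v : ℝ) - a) * (U i j * sw) = ((v : ℝ) - a) * 1 := by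
          rw [mul_one]; linarith
        exact mul_left_cancel₀ hva h8
      have hswne : sw ≠ 0 := by
        intro h9
        have := hws ⟨0, by omega⟩
        rw [h9, mul_zero] at this
        exact one_ne_zero this.symm
      have hwi : ∀ i, U i j = sw⁻¹ := by
        intro i
        rw [← one_div]
        first
        | exact eq_one_div_of_mul_eq_one_right (hws i)
        | exact eq_one_div_of_mul_eq_one_left (hws i)
      have hsw2 : sw * sw = v := by
        calc sw * sw = ∑ i : Fin v, U i j * sw := by rw [← Finset.sum_mul]
          _ = ∑ _i : Fin v, (1:ℝ) := Finset.sum_congr rfl fun i _ => hws i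
          _ = v := by simp
      have hprod2 : ∀ i k, U i j * U k j = (v : ℝ)⁻¹ := by
        intro i k
        rw [hwi i, hwi k, ← mul_inv, hsw2]
      ext i k
      rw [hentry i k, hprod2 i k]
      simp only [Matrix.add_apply, Matrix.smul_apply, Matrix.one_apply, allOnes,
        Matrix.of_apply, smul_eq_mul, mul_one]
      have : ((v : ℝ) - a) * (v : ℝ)⁻¹ = b := by
        rw [hbdef]; field_simp
      rw [this]
  · -- reverse direction
    intro h
    have hJJ : allOnes v * allOnes v = (v : ℝ) • allOnes v := by
      ext i k
      simp [Matrix.mul_apply, allOnes, Finset.sum_const, nsmul_eq_mul]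
    set N : Matrix (Fin v) (Fin v) ℝ := a⁻¹ • 1 - (b / (a * v)) • allOnes v with hNdef
    have hMN : M * N = 1 := by
      rw [h, hNdef]
      simp only [add_mul, mul_sub, smul_mul_assoc, mul_smul_comm, one_mul, mul_one, hJJ,
        smul_smul]
      match_scalars
      · field_simp
      · rw [hbdef]
        field_simp
        ring
    have hMinv : M⁻¹ = N := inv_eq_right_inv hMN
    rw [hMinv, hNdef, trace_sub, trace_smul, trace_smul, trace_one, Fintype.card_fin]
    have htJ : (allOnes v).trace = v := by
      simp [Matrix.trace, Matrix.diag, allOnes]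
    rw [htJ]
    simp only [smul_eq_mul]
    rw [hadef, hbdef, hadef]
    field_simp
    ring
end
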